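/- Let A be a unital *-subalgebra of L(H) for H a finite-dimensional complex Hilbert space, and let {P_1,...,P_p} be a maximal family of nonzero pairwise orthogonal self-adjoint projectors in A. Then for every j, the corner P_j A P_j equals ℂ·P_j, i.e., for every M ∈ A there exists λ ∈ ℂ with P_j M P_j = λ P_j. -/

import Mathlib

open scoped BigOperators

/-- A family of nonzero, self-adjoint, pairwise orthogonal projectors in `A`. -/
def IsOrthProjFamily {E : Type*} [NormedAddCommGroup E] [InnerProductSpace ℂ E]
    [FiniteDimensional ℂ E] (A : StarSubalgebra ℂ (E →ₗ[ℂ] E))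
    {p : ℕ} (P : Fin p → (E →ₗ[ℂ] E)) : Prop :=
  (∀ i, P i ∈ A) ∧ (∀ i, P i ≠ 0) ∧ (∀ i, star (P i) = P i) ∧
    (∀ i j, P i * P j = if i = j then P i else 0)

/-- Maximality: no such family spans a strictly larger subalgebra. -/
def IsMaximalOrthProjFamily {E : Type*} [NormedAddCommGroup E] [InnerProductSpace ℂ E]
    [FiniteDimensional ℂ E] (A : StarSubalgebra ℂ (E →ₗ[ℂ] E))
    {p : ℕ} (P : Fin p → (E →ₗ[ℂ] E)) : Prop :=
  IsOrthProjFamily A P ∧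
    ∀ (m : ℕ) (Q : Fin m → (E →ₗ[ℂ] E)), IsOrthProjFamily A Q →
      ¬ Algebra.adjoin ℂ (Set.range P) < Algebra.adjoin ℂ (Set.range Q)

open Polynomial

/-- Key lemma: a self-adjoint "corner" element which is not a scalar multiple of the
projector `B` yields a nontrivial subprojector `Q` of `B`, polynomial in `N`. -/
lemma exists_subprojector
    {E : Type*} [NormedAddCommGroup E] [InnerProductSpace ℂ E] [FiniteDimensional ℂ E]
    {B N : E →ₗ[ℂ] E} (hB2 : B * B = B) (hBs : star B = B)
    (hNs : star N = N) (hBN : B * N = N) (hNB : N * B = N)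
    (hno : ∀ lam : ℂ, N ≠ lam • B) :
    ∃ Q : E →ₗ[ℂ] E, Q ∈ Algebra.adjoin ℂ ({N} : Set (E →ₗ[ℂ] E)) ∧
      star Q = Q ∧ Q * Q = Q ∧ B * Q = Q ∧ Q * B = Q ∧ Q ≠ 0 ∧ Q ≠ B := by
  classical
  have hsym : N.IsSymmetric := (LinearMap.isSymmetric_iff_isSelfAdjoint N).2 hNs
  set n := Module.finrank ℂ E with hn
  have hnn : Module.finrank ℂ E = n := rfl
  set b := hsym.eigenvectorBasis hnn with hbdef
  set e := hsym.eigenvalues hnn with hedef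
  have happly : ∀ i, N (b i) = (e i : ℂ) • b i := fun i =>
    hsym.apply_eigenvectorBasis hnn i
  have hbne : ∀ i, b i ≠ 0 := fun i => by
    have := b.toBasis.ne_zero i
    simpa [OrthonormalBasis.coe_toBasis] using this
  -- find a nonzero eigenvalue
  have hN0 : N ≠ 0 := by
    intro h; exact hno 0 (by simp [h])
  obtain ⟨i₀, hi₀⟩ : ∃ i, e i ≠ 0 := by
    by_contra h
    push_neg at h
    apply hN0
    apply b.toBasis.ext
    intro i
    simp [OrthonormalBasis.coe_toBasis, happly i, h i]
  set μ : ℝ := e i₀ with hμdef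
  -- Lagrange interpolation polynomial over ℝ
  set s : Finset ℝ := Finset.image e Finset.univ with hsdef
  set r : ℝ → ℝ := fun x => if x = μ then 1 else 0 with hrdef
  set pR : ℝ[X] := Lagrange.interpolate s id r with hpdef
  have hevalR : ∀ i, pR.eval (e i) = r (e i) := by
    intro i
    have : (e i) ∈ s := Finset.mem_image_of_mem e (Finset.mem_univ i)
    exact Lagrange.eval_interpolate_at_node r (Set.injOn_id _) this
  set q : ℂ[X] := pR.map (algebraMap ℝ ℂ) with hqdef
  set Q : E →ₗ[ℂ] E := Polynomial.aeval N q with hQdef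
  have hQb : ∀ i, Q (b i) = (if e i = μ then (1:ℂ) else 0) • b i := by
    intro i
    have hev : Module.End.HasEigenvector N ((e i : ℂ)) (b i) :=
      ⟨Module.End.mem_eigenspace_iff.2 (happly i), hbne i⟩
    have := Module.End.aeval_apply_of_hasEigenvector (p := q) hev
    rw [hQdef, this]
    congr 1
    rw [hqdef]
    have : ((e i : ℝ) : ℂ) = algebraMap ℝ ℂ (e i) := rfl
    rw [this, Polynomial.eval_map, Polynomial.eval₂_at_apply, hevalR i, hrdef]
    by_cases h : e i = μ <;> simp [h]
  have hmem : Q ∈ Algebra.adjoin ℂ ({N} : Set (E →ₗ[ℂ] E)) := by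
    rw [Algebra.adjoin_singleton_eq_range_aeval]
    exact ⟨q, rfl⟩
  have hQs : star Q = Q := by
    rw [hQdef, Polynomial.aeval_eq_sum_range]
    rw [star_sum]
    apply Finset.sum_congr rfl
    intro i _
    rw [star_smul, star_pow, hNs]
    congr 1
    rw [hqdef, Polynomial.coeff_map]
    have : algebraMap ℝ ℂ (pR.coeff i) = ((pR.coeff i : ℝ) : ℂ) := rfl
    rw [this]
    exact Complex.conj_ofReal _
  have hQQ : Q * Q = Q := by
    apply b.toBasis.ext
    intro i
    simp only [OrthonormalBasis.coe_toBasis, Module.End.mul_apply, hQb i]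
    rw [map_smul, hQb i, smul_smul]
    by_cases h : e i = μ <;> simp [h]
  have hBQ : B * Q = Q := by
    have hBfix : ∀ i, e i = μ → B (b i) = b i := by
      intro i hi
      have h1 : b i = ((e i : ℂ))⁻¹ • N (b i) := by
        rw [happly i, smul_smul]
        have : ((e i : ℂ)) ≠ 0 := by
          simpa [Complex.ofReal_eq_zero] using hi ▸ hi₀
        rw [inv_mul_cancel₀ this, one_smul]
      calc B (b i) = B (((e i : ℂ))⁻¹ • N (b i)) := by rw [← h1]
        _ = ((e i : ℂ))⁻¹ • (B * N) (b i) := by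
            rw [map_smul]; rfl
        _ = ((e i : ℂ))⁻¹ • N (b i) := by rw [hBN]
        _ = b i := h1.symm
    apply b.toBasis.ext
    intro i
    simp only [OrthonormalBasis.coe_toBasis, Module.End.mul_apply, hQb i]
    by_cases h : e i = μ
    · simp [h, hBfix i h]
    · simp [h]
  have hQB : Q * B = Q := by
    have h := congrArg star hBQ
    rwa [star_mul, hQs, hBs] at h
  refine ⟨Q, hmem, hQs, hQQ, hBQ, hQB, ?_, ?_⟩
  · -- Q ≠ 0
    intro h
    have := hQb i₀
    rw [h] at this
    simp [hμdef, hbne i₀] at this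
    exact hbne i₀ this.symm
  · -- Q ≠ B
    intro h
    apply hno (μ : ℂ)
    have hNQ : N * Q = (μ : ℂ) • Q := by
      apply b.toBasis.ext
      intro i
      simp only [OrthonormalBasis.coe_toBasis, Module.End.mul_apply, LinearMap.smul_apply, hQb i]
      by_cases hi : e i = μ
      · simp [hi, happly i]
      · simp [hi]
    calc N = N * B := hNB.symm
      _ = N * Q := by rw [h]
      _ = (μ : ℂ) • Q := hNQ
      _ = (μ : ℂ) • B := by rw [h]

/-- The algebra generated by an orthogonal family of projectors is spanned by `1`
and the projectors. -/
lemma adjoin_le_span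
    {E : Type*} [NormedAddCommGroup E] [InnerProductSpace ℂ E]
    {p : ℕ} (P : Fin p → (E →ₗ[ℂ] E))
    (horth : ∀ i j, P i * P j = if i = j then P i else 0) :
    (Algebra.adjoin ℂ (Set.range P) : Set (E →ₗ[ℂ] E)) ⊆
      (Submodule.span ℂ (insert 1 (Set.range P)) : Submodule ℂ (E →ₗ[ℂ] E)) := by
  classical
  set s : Set (E →ₗ[ℂ] E) := insert 1 (Set.range P) with hs
  have hmul : ∀ x y : (E →ₗ[ℂ] E), x ∈ Submodule.span ℂ s → y ∈ Submodule.span ℂ s →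
      x * y ∈ Submodule.span ℂ s := by
    intro x y hx hy
    have h1 : x * y ∈ Submodule.span ℂ s * Submodule.span ℂ s := Submodule.mul_mem_mul hx hy
    rw [Submodule.span_mul_span] at h1
    refine Submodule.span_le.2 ?_ h1
    rintro z ⟨a, ha, c, hc, rfl⟩
    rcases ha with rfl | ⟨i, rfl⟩
    · simp only []; rw [one_mul]; exact Submodule.subset_span hc
    rcases hc with rfl | ⟨k, rfl⟩
    · simp only []; rw [mul_one]; exact Submodule.subset_span (Or.inr ⟨i, rfl⟩)
    · simp only []; rw [horth i k]
      by_cases h : i = k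
      · simp only [h, if_pos rfl]
        exact Submodule.subset_span (Or.inr ⟨k, rfl⟩)
      · simp only [if_neg h]
        exact Submodule.zero_mem _
  have h1 : (1 : E →ₗ[ℂ] E) ∈ Submodule.span ℂ s :=
    Submodule.subset_span (Or.inl rfl)
  have := Algebra.adjoin_le (R := ℂ) (s := Set.range P)
    (S := (Submodule.span ℂ s).toSubalgebra h1 hmul)
    (fun x hx => Submodule.subset_span (Or.inr hx))
  exact fun x hx => this hx

/-- Corner-collapse: corners of elements of the span are multiples of `B = P j`. -/
lemma corner_mem_span
    {E : Type*} [NormedAddCommGroup E] [InnerProductSpace ℂ E]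
    {p : ℕ} (P : Fin p → (E →ₗ[ℂ] E))
    (horth : ∀ i j, P i * P j = if i = j then P i else 0) (j : Fin p)
    {x : E →ₗ[ℂ] E} (hx : x ∈ Submodule.span ℂ (insert 1 (Set.range P))) :
    ∃ c : ℂ, P j * x * P j = c • P j := by
  classical
  have key : ∀ y ∈ Submodule.span ℂ (insert 1 (Set.range P)),
      P j * y * P j ∈ Submodule.span ℂ ({P j} : Set (E →ₗ[ℂ] E)) := by
    intro y hy
    induction hy using Submodule.span_induction with
    | mem z hz =>
      rcases hz with rfl | ⟨i, rfl⟩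
      · rw [mul_one, horth j j, if_pos rfl]
        exact Submodule.subset_span rfl
      · rw [horth j i]
        by_cases h : j = i
        · rw [if_pos h, horth j j, if_pos rfl]
          exact Submodule.subset_span rfl
        · rw [if_neg h, zero_mul]
          exact Submodule.zero_mem _
    | zero => rw [mul_zero, zero_mul]; exact Submodule.zero_mem _
    | add a c _ _ ha hc =>
      rw [mul_add, add_mul]
      exact Submodule.add_mem _ ha hc
    | smul a z _ hz =>
      rw [mul_smul_comm, smul_mul_assoc]
      exact Submodule.smul_mem _ a hz
  obtain ⟨c, hc⟩ := Submodule.mem_span_singleton.1 (key x hx)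
  exact ⟨c, hc.symm⟩
/-- Main step for Hermitian corner elements. -/
lemma selfAdjoint_corner_eq_scalar
    {E : Type*} [NormedAddCommGroup E] [InnerProductSpace ℂ E] [FiniteDimensional ℂ E]
    (A : StarSubalgebra ℂ (E →ₗ[ℂ] E)) {p : ℕ} (P : Fin p → (E →ₗ[ℂ] E))
    (hP : IsMaximalOrthProjFamily A P) (j : Fin p)
    {N : E →ₗ[ℂ] E} (hNA : N ∈ A) (hNs : star N = N)
    (hBN : P j * N = N) (hNB : N * P j = N) :
    ∃ lam : ℂ, N = lam • P j := by
  classical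
  obtain ⟨⟨hmemP, hneP, hstarP, horthP⟩, hmax⟩ := hP
  set B : E →ₗ[ℂ] E := P j with hBdef
  have hB2 : B * B = B := by rw [hBdef, horthP j j, if_pos rfl]
  have hBs : star B = B := hstarP j
  have hB0 : B ≠ 0 := hneP j
  by_contra hcon
  push_neg at hcon
  obtain ⟨Q, hQadj, hQs, hQQ, hBQ, hQB, hQ0, hQneB⟩ :=
    exists_subprojector hB2 hBs hNs hBN hNB hcon
  have hQA : Q ∈ A := by
    have hle : Algebra.adjoin ℂ ({N} : Set (E →ₗ[ℂ] E)) ≤ A.toSubalgebra :=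
      Algebra.adjoin_le (Set.singleton_subset_iff.2 hNA)
    exact hle hQadj
  -- multiplication helpers
  have hBPi : ∀ i, i ≠ j → B * P i = 0 := fun i h => by
    rw [hBdef, horthP j i, if_neg (fun e => h e.symm)]
  have hPiB : ∀ i, i ≠ j → P i * B = 0 := fun i h => by
    rw [hBdef, horthP i j, if_neg h]
  have hQPi : ∀ i, i ≠ j → Q * P i = 0 := fun i h => by
    calc Q * P i = Q * (B * P i) := by rw [← mul_assoc, hQB]
      _ = 0 := by rw [hBPi i h, mul_zero]
  have hPiQ : ∀ i, i ≠ j → P i * Q = 0 := fun i h => by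
    calc P i * Q = (P i * B) * Q := by rw [mul_assoc, hBQ]
      _ = 0 := by rw [hPiB i h, zero_mul]
  have hBmQ_sq : (B - Q) * (B - Q) = B - Q := by
    rw [sub_mul, mul_sub, mul_sub, hB2, hBQ, hQB, hQQ, sub_self, sub_zero]
  have hBmQ_Q : (B - Q) * Q = 0 := by rw [sub_mul, hBQ, hQQ, sub_self]
  have hQ_BmQ : Q * (B - Q) = 0 := by rw [mul_sub, hQB, hQQ, sub_self]
  have hBmQ_Pi : ∀ i, i ≠ j → (B - Q) * P i = 0 := fun i h => by
    rw [sub_mul, hBPi i h, hQPi i h, sub_zero]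
  have hPi_BmQ : ∀ i, i ≠ j → P i * (B - Q) = 0 := fun i h => by
    rw [mul_sub, hPiB i h, hPiQ i h, sub_zero]
  -- the refined family
  set R : Fin (p + 1) → (E →ₗ[ℂ] E) :=
    Fin.snoc (Function.update P j (B - Q)) Q with hRdef
  have hRlast : R (Fin.last p) = Q := by simp only [hRdef, Fin.snoc_last]
  have hRcast : ∀ i : Fin p, R (Fin.castSucc i) = if i = j then B - Q else P i := by
    intro i
    simp only [hRdef, Fin.snoc_castSucc, Function.update_apply]
  have hfamR : IsOrthProjFamily A R := by
    refine ⟨?_, ?_, ?_, ?_⟩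
    · intro i
      refine Fin.lastCases ?_ (fun k => ?_) i
      · rw [hRlast]; exact hQA
      · rw [hRcast k]
        by_cases h : k = j
        · rw [if_pos h]; exact sub_mem (hmemP j) hQA
        · rw [if_neg h]; exact hmemP k
    · intro i
      refine Fin.lastCases ?_ (fun k => ?_) i
      · rw [hRlast]; exact hQ0
      · rw [hRcast k]
        by_cases h : k = j
        · rw [if_pos h]
          exact sub_ne_zero.2 (Ne.symm hQneB)
        · rw [if_neg h]; exact hneP k
    · intro i
      refine Fin.lastCases ?_ (fun k => ?_) i
      · rw [hRlast]; exact hQs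
      · rw [hRcast k]
        by_cases h : k = j
        · rw [if_pos h, star_sub, hBs, hQs]
        · rw [if_neg h]; exact hstarP k
    · intro i k
      refine Fin.lastCases ?_ (fun i' => ?_) i
      · refine Fin.lastCases ?_ (fun k' => ?_) k
        · rw [hRlast, if_pos rfl, hQQ]
        · rw [hRlast, hRcast k', if_neg (Fin.castSucc_lt_last k').ne']
          by_cases h : k' = j
          · rw [if_pos h, hQ_BmQ]
          · rw [if_neg h]; exact hQPi k' h
      · refine Fin.lastCases ?_ (fun k' => ?_) k
        · rw [hRlast, hRcast i', if_neg (Fin.castSucc_lt_last i').ne]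
          by_cases h : i' = j
          · rw [if_pos h, hBmQ_Q]
          · rw [if_neg h]; exact hPiQ i' h
        · rw [hRcast i', hRcast k']
          simp only [Fin.castSucc_inj]
          by_cases hi : i' = j <;> by_cases hk : k' = j
          · have hik : i' = k' := hi.trans hk.symm
            rw [if_pos hi, if_pos hk, if_pos hik, hBmQ_sq]
          · have hik : i' ≠ k' := fun h => hk (h.symm.trans hi)
            rw [if_pos hi, if_neg hk, if_neg hik]
            exact hBmQ_Pi k' hk
          · have hik : i' ≠ k' := fun h => hi (h.trans hk)
            rw [if_neg hi, if_pos hk, if_neg hik]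
            exact hPi_BmQ i' hi
          · rw [if_neg hi, if_neg hk, horthP i' k']
  -- maximality gives Q ∈ adjoin (range P)
  have hle : Algebra.adjoin ℂ (Set.range P) ≤ Algebra.adjoin ℂ (Set.range R) := by
    apply Algebra.adjoin_le
    rintro x ⟨i, rfl⟩
    by_cases h : i = j
    · have h1 : B - Q ∈ Algebra.adjoin ℂ (Set.range R) :=
        Algebra.subset_adjoin ⟨Fin.castSucc j, (hRcast j).trans (if_pos rfl)⟩
      have h2 : Q ∈ Algebra.adjoin ℂ (Set.range R) :=
        Algebra.subset_adjoin ⟨Fin.last p, hRlast⟩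
      have h3 := add_mem h1 h2
      rw [sub_add_cancel] at h3
      rw [h]
      exact h3
    · exact Algebra.subset_adjoin ⟨Fin.castSucc i, (hRcast i).trans (if_neg h)⟩
  have heq : Algebra.adjoin ℂ (Set.range P) = Algebra.adjoin ℂ (Set.range R) := by
    by_contra hne
    exact hmax (p + 1) R hfamR (lt_of_le_of_ne hle hne)
  have hQspan : Q ∈ Submodule.span ℂ (insert 1 (Set.range P)) := by
    apply adjoin_le_span P horthP
    rw [heq]
    exact Algebra.subset_adjoin ⟨Fin.last p, hRlast⟩
  obtain ⟨c, hc⟩ := corner_mem_span P horthP j hQspan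
  have hQc : Q = c • B := by
    rw [hBdef, ← hc, ← hBdef, hBQ, hQB]
  have hcc : c * c = c := by
    have h1 : (c * c) • B = c • B := by
      calc (c * c) • B = (c • B) * (c • B) := by
            rw [smul_mul_smul, hB2]
        _ = Q * Q := by rw [← hQc]
        _ = Q := hQQ
        _ = c • B := hQc
    exact smul_left_injective ℂ hB0 h1
  have : c * (c - 1) = 0 := by ring_nf; linear_combination hcc
  rcases mul_eq_zero.1 this with h | h
  · exact hQ0 (by rw [hQc, h, zero_smul])
  · have : c = 1 := sub_eq_zero.1 h
    exact hQneB (by rw [hQc, this, one_smul])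

theorem corner_eq_scalar
    {E : Type*} [NormedAddCommGroup E] [InnerProductSpace ℂ E] [FiniteDimensional ℂ E]
    (A : StarSubalgebra ℂ (E →ₗ[ℂ] E)) {p : ℕ} (P : Fin p → (E →ₗ[ℂ] E))
    (hP : IsMaximalOrthProjFamily A P) :
    ∀ j, ∀ M ∈ A, ∃ lam : ℂ, P j * M * P j = lam • P j := by
  intro j M hM
  obtain ⟨hmemP, hneP, hstarP, horthP⟩ := hP.1
  set B : E →ₗ[ℂ] E := P j with hBdef
  have hB2 : B * B = B := by rw [hBdef, horthP j j, if_pos rfl]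
  have hBs : star B = B := hstarP j
  have hBA : B ∈ A := hmemP j
  have key_star : ∀ X : E →ₗ[ℂ] E, star (B * X * B) = B * star X * B := fun X => by
    rw [star_mul, star_mul, hBs, ← mul_assoc]
  have key_corner : ∀ X : E →ₗ[ℂ] E, B * (B * X * B) * B = B * X * B := fun X => by
    have h : B * (B * X * B) * B = (B * B) * X * (B * B) := by noncomm_ring
    rw [h, hB2]
  have key_left : ∀ X : E →ₗ[ℂ] E, B * (B * X * B) = B * X * B := fun X => by
    have h : B * (B * X * B) = (B * B) * X * B := by noncomm_ring
    rw [h, hB2]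
  have key_right : ∀ X : E →ₗ[ℂ] E, (B * X * B) * B = B * X * B := fun X => by
    have h : (B * X * B) * B = B * X * (B * B) := by noncomm_ring
    rw [h, hB2]
  set N₁ : E →ₗ[ℂ] E := B * (M + star M) * B with hN₁def
  set N₂ : E →ₗ[ℂ] E := B * (Complex.I • (M - star M)) * B with hN₂def
  have hN₁A : N₁ ∈ A := mul_mem (mul_mem hBA (add_mem hM (star_mem hM))) hBA
  have hN₂A : N₂ ∈ A :=
    mul_mem (mul_mem hBA (SMulMemClass.smul_mem _ (sub_mem hM (star_mem hM)))) hBA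
  have hN₁s : star N₁ = N₁ := by
    rw [hN₁def, key_star, star_add, star_star, add_comm]
  have hN₂s : star N₂ = N₂ := by
    rw [hN₂def, key_star]
    congr 1
    rw [star_smul, star_sub, star_star]
    simp only [Complex.star_def, Complex.conj_I]
    rw [neg_smul, ← smul_neg, neg_sub]
  obtain ⟨l₁, hl₁⟩ := selfAdjoint_corner_eq_scalar A P hP j hN₁A hN₁s
    (key_left _) (key_right _)
  obtain ⟨l₂, hl₂⟩ := selfAdjoint_corner_eq_scalar A P hP j hN₂A hN₂s
    (key_left _) (key_right _)
  set X : E →ₗ[ℂ] E := B * M * B with hXdef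
  set Y : E →ₗ[ℂ] E := B * star M * B with hYdef
  have h1 : X + Y = l₁ • B := by
    rw [← hl₁, hN₁def, mul_add, add_mul]
  have h2 : Complex.I • (X - Y) = l₂ • B := by
    rw [← hl₂, hN₂def, mul_smul_comm, smul_mul_assoc, mul_sub, sub_mul]
  have h3 : X - Y = (-Complex.I * l₂) • B := by
    have h := congrArg (fun z => (-Complex.I) • z) h2
    simp only [smul_smul] at h
    rw [show -Complex.I * Complex.I = 1 by simp [Complex.I_mul_I]] at h
    rwa [one_smul] at h
  refine ⟨(2:ℂ)⁻¹ * (l₁ + -Complex.I * l₂), ?_⟩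
  have h4 : X = (2:ℂ)⁻¹ • ((X + Y) + (X - Y)) := by module
  calc B * M * B = X := rfl
    _ = (2:ℂ)⁻¹ • ((X + Y) + (X - Y)) := h4
    _ = (2:ℂ)⁻¹ • (l₁ • B + (-Complex.I * l₂) • B) := by rw [h1, h3]
    _ = ((2:ℂ)⁻¹ * (l₁ + -Complex.I * l₂)) • B := by
        rw [← add_smul, smul_smul]
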